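/- Let D ≥ 1, ℏ > 0, α ∈ ℝ^D × ℝ^D, k ≥ 1 an integer, and ψ ∈ 𝒮(ℝ^D; ℂ). Then ‖ψ‖_{H^k_α} ≥ √ℏ · ‖ψ‖_{H^{k−1}_α}. -/

import Mathlib

/-- The `L²` norm of a function on `ℝ^D`. -/
noncomputable def L2norm (D : ℕ) (f : EuclideanSpace ℝ (Fin D) → ℂ) : ℝ :=
  Real.sqrt (∫ x : EuclideanSpace ℝ (Fin D), ‖f x‖ ^ 2)

/-- The centered phase-space operators `A_a^α`: position components (`Sum.inl j`) act as
multiplication by `x_j − α_{x,j}`, momentum components (`Sum.inr j`) act as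
`−iℏ ∂_{x_j} − α_{p,j}`. -/
noncomputable def Aop (D : ℕ) (ℏ : ℝ)
    (α : EuclideanSpace ℝ (Fin D) × EuclideanSpace ℝ (Fin D))
    (a : Fin D ⊕ Fin D) (ψ : EuclideanSpace ℝ (Fin D) → ℂ) :
    EuclideanSpace ℝ (Fin D) → ℂ :=
  fun x =>
    match a with
    | Sum.inl j => ((x j : ℂ) - (α.1 j : ℂ)) * ψ x
    | Sum.inr j => (-Complex.I * (ℏ : ℂ)) * fderiv ℝ ψ x (EuclideanSpace.single j 1)
        - (α.2 j : ℂ) * ψ x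

/-- The centered isotropic Sobolev norm
`‖ψ‖_{H^k_α} = ∑_{m ∈ {1,…,2D}^k} ‖A_{m_1}^α (⋯ (A_{m_k}^α ψ))‖_{L²}`. -/
noncomputable def HkNorm (D : ℕ) (ℏ : ℝ)
    (α : EuclideanSpace ℝ (Fin D) × EuclideanSpace ℝ (Fin D)) (k : ℕ)
    (ψ : EuclideanSpace ℝ (Fin D) → ℂ) : ℝ :=
  ∑ m : Fin k → (Fin D ⊕ Fin D),
    L2norm D ((List.ofFn m).foldr (fun a g => Aop D ℏ α a g) ψ)

open MeasureTheory SchwartzMap ComplexConjugate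

variable {D : ℕ}

local notation "E" => EuclideanSpace ℝ (Fin D)

lemma tg (j : Fin D) (c : ℝ) :
    Function.HasTemperateGrowth (fun x : EuclideanSpace ℝ (Fin D) => ((x j : ℂ) - (c : ℂ))) := by
  set L : EuclideanSpace ℝ (Fin D) →L[ℝ] ℂ :=
    Complex.ofRealCLM.comp (EuclideanSpace.proj j) with hL
  have hLx : ∀ x : EuclideanSpace ℝ (Fin D), L x = (x j : ℂ) := fun x => rfl
  have heq : (fun x : EuclideanSpace ℝ (Fin D) => ((x j : ℂ) - (c : ℂ)))
      = fun x => L x - (c : ℂ) := by funext x; rw [hLx]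
  rw [heq]
  apply Function.HasTemperateGrowth.of_fderiv (k := 1) (C := ‖L‖ + ‖(c : ℂ)‖)
  · have : (fderiv ℝ fun x : EuclideanSpace ℝ (Fin D) => L x - (c : ℂ)) = fun _ => L := by
      funext x
      rw [fderiv_sub_const, L.fderiv]
    rw [this]
    exact .const _
  · exact L.differentiable.sub_const _
  · intro x
    have h1 : ‖L x - (c : ℂ)‖ ≤ ‖L x‖ + ‖(c : ℂ)‖ := norm_sub_le _ _
    have h2 : ‖L x‖ ≤ ‖L‖ * ‖x‖ := L.le_opNorm x
    have h3 : (0:ℝ) ≤ ‖x‖ := norm_nonneg _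
    have h4 : (0:ℝ) ≤ ‖L‖ := norm_nonneg _
    have h5 : (0:ℝ) ≤ ‖(c:ℂ)‖ := norm_nonneg _
    rw [pow_one]
    nlinarith

noncomputable def conjCLM : ℂ →L[ℝ] ℂ := Complex.conjCLE.toContinuousLinearMap

noncomputable def conjS (φ : 𝓢(EuclideanSpace ℝ (Fin D), ℂ)) : 𝓢(EuclideanSpace ℝ (Fin D), ℂ) :=
  SchwartzMap.bilinLeftCLM ((ContinuousLinearMap.mul ℝ ℂ).comp conjCLM)
    (Function.HasTemperateGrowth.const (1 : ℂ)) φ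

lemma conjS_apply (φ : 𝓢(EuclideanSpace ℝ (Fin D), ℂ)) (x : EuclideanSpace ℝ (Fin D)) :
    conjS φ x = conj (φ x) := mul_one _

noncomputable def mulCoord (j : Fin D) (c : ℝ) :
    𝓢(EuclideanSpace ℝ (Fin D), ℂ) →L[ℝ] 𝓢(EuclideanSpace ℝ (Fin D), ℂ) :=
  SchwartzMap.bilinLeftCLM (ContinuousLinearMap.mul ℝ ℂ) (tg j c)

lemma mulCoord_apply (j : Fin D) (c : ℝ) (φ : 𝓢(EuclideanSpace ℝ (Fin D), ℂ))
    (x : EuclideanSpace ℝ (Fin D)) : mulCoord j c φ x = φ x * ((x j : ℂ) - (c : ℂ)) := rfl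

lemma integrable_mulS (p q : 𝓢(EuclideanSpace ℝ (Fin D), ℂ)) :
    Integrable (fun x => p x * q x) (volume : Measure (EuclideanSpace ℝ (Fin D))) := by
  set Sq : ℝ := (SchwartzMap.seminorm ℝ 0 0) q with hSq
  have hq : ∀ x, ‖q x‖ ≤ Sq := by
    intro x
    have := q.le_seminorm ℝ 0 0 x
    simpa using this
  refine ((p.integrable).norm.const_mul Sq).mono'
    ((p.continuous.mul q.continuous).aestronglyMeasurable) (ae_of_all _ fun x => ?_)
  rw [norm_mul]
  calc ‖p x‖ * ‖q x‖ ≤ ‖p x‖ * Sq := by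
        exact mul_le_mul_of_nonneg_left (hq x) (norm_nonneg _)
    _ = Sq * ‖p x‖ := mul_comm _ _

lemma integrable_normsq (p : 𝓢(EuclideanSpace ℝ (Fin D), ℂ)) :
    Integrable (fun x => ‖p x‖ ^ 2) (volume : Measure (EuclideanSpace ℝ (Fin D))) := by
  have := (integrable_mulS p (conjS p)).norm
  refine this.congr (ae_of_all _ fun x => ?_)
  show ‖p x * conjS p x‖ = ‖p x‖ ^ 2
  rw [norm_mul, conjS_apply, RCLike.norm_conj, sq]

set_option maxHeartbeats 1000000 in
lemma ibp (j : Fin D) (c : ℝ) (φ : 𝓢(EuclideanSpace ℝ (Fin D), ℂ)) :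
    (∫ x : EuclideanSpace ℝ (Fin D), ((x j : ℂ) - (c : ℂ)) *
        (φ x * conj (fderiv ℝ (⇑φ) x (EuclideanSpace.single j 1)) +
          conj (φ x) * fderiv ℝ (⇑φ) x (EuclideanSpace.single j 1)))
      = - ∫ x : EuclideanSpace ℝ (Fin D), φ x * conj (φ x) := by
  set e : EuclideanSpace ℝ (Fin D) := EuclideanSpace.single j 1 with he
  set L : EuclideanSpace ℝ (Fin D) →L[ℝ] ℂ :=
    Complex.ofRealCLM.comp (EuclideanSpace.proj j) with hLdef
  set dS : 𝓢(EuclideanSpace ℝ (Fin D), ℂ) := LineDeriv.lineDerivOpCLM ℝ 𝓢(EuclideanSpace ℝ (Fin D), ℂ) e φ with hdS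
  have hdSx : ∀ x, dS x = fderiv ℝ (⇑φ) x e := fun x => rfl
  set G : EuclideanSpace ℝ (Fin D) → (EuclideanSpace ℝ (Fin D) →L[ℝ] ℂ) :=
    fun x => φ x • (conjCLM.comp (fderiv ℝ (⇑φ) x)) + conj (φ x) • fderiv ℝ (⇑φ) x with hG
  have hGe : ∀ x, G x e = φ x * conj (fderiv ℝ (⇑φ) x e) + conj (φ x) * fderiv ℝ (⇑φ) x e := by
    intro x
    simp [hG, conjCLM, smul_eq_mul]
  have hg_int : Integrable (fun x => φ x * conj (φ x))
      (volume : Measure (EuclideanSpace ℝ (Fin D))) :=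
    (integrable_mulS φ (conjS φ)).congr (ae_of_all _ fun x => by
      show φ x * conjS φ x = φ x * conj (φ x); rw [conjS_apply])
  have h1 : Integrable (fun x => (ContinuousLinearMap.mul ℝ ℂ) ((fun _ => L) x e) (φ x * conj (φ x)))
      (volume : Measure (EuclideanSpace ℝ (Fin D))) := hg_int.const_mul (L e)
  have h2 : Integrable (fun x => (ContinuousLinearMap.mul ℝ ℂ) (((x : EuclideanSpace ℝ (Fin D)) j : ℂ) - (c : ℂ)) (G x e))
      (volume : Measure (EuclideanSpace ℝ (Fin D))) := by
    refine ((integrable_mulS (mulCoord j c φ) (conjS dS)).add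
      (integrable_mulS (mulCoord j c dS) (conjS φ))).congr (ae_of_all _ fun x => ?_)
    show mulCoord j c φ x * conjS dS x + mulCoord j c dS x * conjS φ x
        = (((x : EuclideanSpace ℝ (Fin D)) j : ℂ) - (c : ℂ)) * (G x e)
    rw [mulCoord_apply, mulCoord_apply, conjS_apply, conjS_apply, hGe, ← hdSx x]
    ring
  have h3 : Integrable (fun x => (ContinuousLinearMap.mul ℝ ℂ) (((x : EuclideanSpace ℝ (Fin D)) j : ℂ) - (c : ℂ)) (φ x * conj (φ x)))
      (volume : Measure (EuclideanSpace ℝ (Fin D))) := by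
    refine (integrable_mulS (mulCoord j c φ) (conjS φ)).congr (ae_of_all _ fun x => ?_)
    show mulCoord j c φ x * conjS φ x
        = (((x : EuclideanSpace ℝ (Fin D)) j : ℂ) - (c : ℂ)) * (φ x * conj (φ x))
    rw [mulCoord_apply, conjS_apply]
    ring
  have hf : ∀ x, HasFDerivAt (fun y : EuclideanSpace ℝ (Fin D) => ((y j : ℂ) - (c : ℂ))) L x := by
    intro x
    exact L.hasFDerivAt.sub_const _
  have hg : ∀ x, HasFDerivAt (fun y => φ y * conj (φ y)) (G x) x := by
    intro x
    have hφx : HasFDerivAt (⇑φ) (fderiv ℝ (⇑φ) x) x :=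
      (φ.differentiable x).hasFDerivAt
    have hcj : HasFDerivAt (fun y => conj (φ y)) (conjCLM.comp (fderiv ℝ (⇑φ) x)) x :=
      conjCLM.hasFDerivAt.comp x hφx
    exact hφx.mul hcj
  have main := integral_bilinear_hasFDerivAt_right_eq_neg_left_of_integrable
    (μ := (volume : Measure (EuclideanSpace ℝ (Fin D)))) (B := ContinuousLinearMap.mul ℝ ℂ)
    (v := e) (f' := fun _ => L) h1 h2 h3 (fun x _ => hf x) (fun x _ => hg x)
  have hLe : L e = 1 := by
    simp [hLdef, he]
  calc (∫ x : EuclideanSpace ℝ (Fin D), ((x j : ℂ) - (c : ℂ)) *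
        (φ x * conj (fderiv ℝ (⇑φ) x e) + conj (φ x) * fderiv ℝ (⇑φ) x e))
      = ∫ x : EuclideanSpace ℝ (Fin D),
          (ContinuousLinearMap.mul ℝ ℂ) ((x j : ℂ) - (c : ℂ)) (G x e) := by
        refine integral_congr_ae (ae_of_all _ fun x => ?_)
        show ((x j : ℂ) - (c : ℂ)) *
            (φ x * conj (fderiv ℝ (⇑φ) x e) + conj (φ x) * fderiv ℝ (⇑φ) x e)
          = ((x j : ℂ) - (c : ℂ)) * (G x e)
        rw [hGe]
    _ = - ∫ x : EuclideanSpace ℝ (Fin D),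
          (ContinuousLinearMap.mul ℝ ℂ) ((fun _ => L) x e) (φ x * conj (φ x)) := main
    _ = - ∫ x : EuclideanSpace ℝ (Fin D), φ x * conj (φ x) := by
        simp only [hLe]
        norm_num

set_option maxHeartbeats 1000000 in
lemma key (ℏ : ℝ) (c b : ℝ) (j : Fin D) (φ u v : 𝓢(EuclideanSpace ℝ (Fin D), ℂ))
    (hu : ∀ x, u x = ((x j : ℂ) - (c : ℂ)) * φ x)
    (hv : ∀ x, v x = (-Complex.I * (ℏ : ℂ)) * fderiv ℝ (⇑φ) x (EuclideanSpace.single j 1)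
        - (b : ℂ) * φ x) :
    ℏ * ∫ x : EuclideanSpace ℝ (Fin D), ‖φ x‖ ^ 2
      ≤ (∫ x : EuclideanSpace ℝ (Fin D), ‖u x‖ ^ 2)
        + ∫ x : EuclideanSpace ℝ (Fin D), ‖v x‖ ^ 2 := by
  set dS : 𝓢(EuclideanSpace ℝ (Fin D), ℂ) :=
    LineDeriv.lineDerivOpCLM ℝ 𝓢(EuclideanSpace ℝ (Fin D), ℂ) (EuclideanSpace.single j (1:ℝ)) φ with hdS
  have hdSx : ∀ x, dS x = fderiv ℝ (⇑φ) x (EuclideanSpace.single j 1) := fun x => rfl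
  set N : ℝ := ∫ x : EuclideanSpace ℝ (Fin D), ‖φ x‖ ^ 2 with hN
  set I : ℂ := ∫ x : EuclideanSpace ℝ (Fin D), conj (u x) * v x with hI
  have hI_int : Integrable (fun x => conj (u x) * v x)
      (volume : Measure (EuclideanSpace ℝ (Fin D))) :=
    (integrable_mulS (conjS u) v).congr (ae_of_all _ fun x => by
      show conjS u x * v x = conj (u x) * v x; rw [conjS_apply])
  have hI2_int : Integrable (fun x => u x * conj (v x))
      (volume : Measure (EuclideanSpace ℝ (Fin D))) :=
    (integrable_mulS u (conjS v)).congr (ae_of_all _ fun x => by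
      show u x * conjS v x = u x * conj (v x); rw [conjS_apply])
  have hconjI : conj I = ∫ x : EuclideanSpace ℝ (Fin D), u x * conj (v x) := by
    rw [hI, ← integral_conj]
    refine integral_congr_ae (ae_of_all _ fun x => ?_)
    beta_reduce
    rw [map_mul, Complex.conj_conj]
  have hpt : ∀ x : EuclideanSpace ℝ (Fin D), conj (u x) * v x - u x * conj (v x)
      = (-Complex.I * (ℏ : ℂ)) * (((x j : ℂ) - (c : ℂ)) *
          (φ x * conj (dS x) + conj (φ x) * dS x)) := by
    intro x
    rw [hu x, hv x, ← hdSx x]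
    simp only [map_mul, map_sub, map_neg, Complex.conj_I, Complex.conj_ofReal]
    ring
  have hphi : ∀ x : EuclideanSpace ℝ (Fin D), φ x * conj (φ x) = ((‖φ x‖ ^ 2 : ℝ) : ℂ) := by
    intro x
    rw [Complex.mul_conj]
    norm_cast
    rw [Complex.normSq_eq_norm_sq]
  have hibp := ibp j c φ
  have hdiff : I - conj I = Complex.I * (ℏ : ℂ) * (N : ℂ) := by
    rw [hconjI, hI, ← integral_sub hI_int hI2_int]
    calc (∫ x : EuclideanSpace ℝ (Fin D), (conj (u x) * v x - u x * conj (v x)))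
        = ∫ x : EuclideanSpace ℝ (Fin D), (-Complex.I * (ℏ : ℂ)) •
            (((x j : ℂ) - (c : ℂ)) * (φ x * conj (dS x) + conj (φ x) * dS x)) := by
          refine integral_congr_ae (ae_of_all _ fun x => ?_)
          beta_reduce
          rw [hpt x, smul_eq_mul]
      _ = (-Complex.I * (ℏ : ℂ)) • ∫ x : EuclideanSpace ℝ (Fin D),
            (((x j : ℂ) - (c : ℂ)) * (φ x * conj (dS x) + conj (φ x) * dS x)) :=
          integral_smul _ _
      _ = (-Complex.I * (ℏ : ℂ)) • (- ∫ x : EuclideanSpace ℝ (Fin D), φ x * conj (φ x)) := by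
          have h' : (∫ x : EuclideanSpace ℝ (Fin D), (((x j : ℂ) - (c : ℂ)) *
              (φ x * conj (dS x) + conj (φ x) * dS x)))
              = - ∫ x : EuclideanSpace ℝ (Fin D), φ x * conj (φ x) := by
            rw [← hibp]
            refine integral_congr_ae (ae_of_all _ fun x => ?_)
            beta_reduce
            rw [hdSx x]
          rw [h']
      _ = Complex.I * (ℏ : ℂ) * (N : ℂ) := by
          have : (∫ x : EuclideanSpace ℝ (Fin D), φ x * conj (φ x)) = ((N : ℝ) : ℂ) := by
            rw [hN]
            rw [show (fun x : EuclideanSpace ℝ (Fin D) => φ x * conj (φ x))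
              = fun x => ((‖φ x‖ ^ 2 : ℝ) : ℂ) from funext hphi]
            exact integral_ofReal
          rw [this, smul_eq_mul]
          ring
  have him : 2 * I.im = ℏ * N := by
    have h := congrArg Complex.im hdiff
    simp only [Complex.sub_im, Complex.conj_im, Complex.mul_im, Complex.mul_re, Complex.I_re,
      Complex.I_im, Complex.ofReal_re, Complex.ofReal_im] at h
    ring_nf at h ⊢
    linarith
  have hIm_le : I.im ≤ ‖I‖ := by
    exact Complex.im_le_norm I
  have hnorm_le : ‖I‖ ≤ ∫ x : EuclideanSpace ℝ (Fin D), ‖u x‖ * ‖v x‖ := by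
    refine (norm_integral_le_integral_norm _).trans_eq ?_
    refine integral_congr_ae (ae_of_all _ fun x => ?_)
    beta_reduce
    rw [norm_mul, RCLike.norm_conj]
  have hAB : (∫ x : EuclideanSpace ℝ (Fin D), ‖u x‖ * ‖v x‖)
      ≤ ((∫ x : EuclideanSpace ℝ (Fin D), ‖u x‖ ^ 2)
          + ∫ x : EuclideanSpace ℝ (Fin D), ‖v x‖ ^ 2) / 2 := by
    have hint : Integrable (fun x => (‖u x‖ ^ 2 + ‖v x‖ ^ 2) / 2)
        (volume : Measure (EuclideanSpace ℝ (Fin D))) :=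
      ((integrable_normsq u).add (integrable_normsq v)).div_const 2
    calc (∫ x : EuclideanSpace ℝ (Fin D), ‖u x‖ * ‖v x‖)
        ≤ ∫ x : EuclideanSpace ℝ (Fin D), (‖u x‖ ^ 2 + ‖v x‖ ^ 2) / 2 := by
          refine integral_mono_of_nonneg (ae_of_all _ fun x => ?_) hint (ae_of_all _ fun x => ?_)
          · positivity
          · have := sq_nonneg (‖u x‖ - ‖v x‖)
            show ‖u x‖ * ‖v x‖ ≤ (‖u x‖ ^ 2 + ‖v x‖ ^ 2) / 2
            nlinarith
      _ = ((∫ x : EuclideanSpace ℝ (Fin D), ‖u x‖ ^ 2)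
            + ∫ x : EuclideanSpace ℝ (Fin D), ‖v x‖ ^ 2) / 2 := by
          rw [integral_div, integral_add (integrable_normsq u) (integrable_normsq v)]
  have : ℏ * N ≤ 2 * (((∫ x : EuclideanSpace ℝ (Fin D), ‖u x‖ ^ 2)
      + ∫ x : EuclideanSpace ℝ (Fin D), ‖v x‖ ^ 2) / 2) := by
    rw [← him]
    have := hIm_le.trans (hnorm_le.trans hAB)
    linarith
  linarith

noncomputable def AopS (D : ℕ) (ℏ : ℝ)
    (α : EuclideanSpace ℝ (Fin D) × EuclideanSpace ℝ (Fin D))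
    (a : Fin D ⊕ Fin D) (φ : 𝓢(EuclideanSpace ℝ (Fin D), ℂ)) :
    𝓢(EuclideanSpace ℝ (Fin D), ℂ) :=
  match a with
  | Sum.inl j => mulCoord j (α.1 j) φ
  | Sum.inr j => (-Complex.I * (ℏ : ℂ)) •
      LineDeriv.lineDerivOpCLM ℝ 𝓢(EuclideanSpace ℝ (Fin D), ℂ) (EuclideanSpace.single j (1:ℝ)) φ - ((α.2 j : ℂ)) • φ

lemma AopS_apply (D : ℕ) (ℏ : ℝ)
    (α : EuclideanSpace ℝ (Fin D) × EuclideanSpace ℝ (Fin D))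
    (a : Fin D ⊕ Fin D) (φ : 𝓢(EuclideanSpace ℝ (Fin D), ℂ)) (x : EuclideanSpace ℝ (Fin D)) :
    AopS D ℏ α a φ x = Aop D ℏ α a (⇑φ) x := by
  cases a with
  | inl j =>
    show mulCoord j (α.1 j) φ x = ((x j : ℂ) - (α.1 j : ℂ)) * φ x
    rw [mulCoord_apply]
    ring
  | inr j =>
    show ((-Complex.I * (ℏ : ℂ)) • LineDeriv.lineDerivOpCLM ℝ 𝓢(EuclideanSpace ℝ (Fin D), ℂ) (EuclideanSpace.single j (1:ℝ)) φ
        - ((α.2 j : ℂ)) • φ) x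
      = (-Complex.I * (ℏ : ℂ)) * fderiv ℝ (⇑φ) x (EuclideanSpace.single j 1) - (α.2 j : ℂ) * φ x
    rw [SchwartzMap.sub_apply, SchwartzMap.smul_apply, SchwartzMap.smul_apply,
      LineDeriv.lineDerivOpCLM_apply, SchwartzMap.lineDerivOp_apply_eq_fderiv, smul_eq_mul, smul_eq_mul]

lemma coe_fold (D : ℕ) (ℏ : ℝ)
    (α : EuclideanSpace ℝ (Fin D) × EuclideanSpace ℝ (Fin D))
    (l : List (Fin D ⊕ Fin D)) (ψ : 𝓢(EuclideanSpace ℝ (Fin D), ℂ)) :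
    l.foldr (fun a g => Aop D ℏ α a g) (⇑ψ) = ⇑(l.foldr (AopS D ℏ α) ψ) := by
  induction l with
  | nil => rfl
  | cons a l ih =>
    show Aop D ℏ α a (l.foldr (fun a g => Aop D ℏ α a g) (⇑ψ)) = _
    rw [ih]
    funext x
    exact (AopS_apply D ℏ α a _ x).symm

lemma sqrt_add_le (A B : ℝ) (hA : 0 ≤ A) (hB : 0 ≤ B) :
    Real.sqrt (A + B) ≤ Real.sqrt A + Real.sqrt B := by
  have h1 : A + B ≤ (Real.sqrt A + Real.sqrt B) ^ 2 := by
    have := Real.sq_sqrt hA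
    have := Real.sq_sqrt hB
    nlinarith [Real.sqrt_nonneg A, Real.sqrt_nonneg B]
  calc Real.sqrt (A + B) ≤ Real.sqrt ((Real.sqrt A + Real.sqrt B) ^ 2) := Real.sqrt_le_sqrt h1
    _ = Real.sqrt A + Real.sqrt B := by
      rw [Real.sqrt_sq (by positivity)]

lemma L2norm_nonneg (D : ℕ) (f : EuclideanSpace ℝ (Fin D) → ℂ) : 0 ≤ L2norm D f :=
  Real.sqrt_nonneg _

lemma key2 (D : ℕ) (ℏ : ℝ) (hℏ : 0 < ℏ)
    (α : EuclideanSpace ℝ (Fin D) × EuclideanSpace ℝ (Fin D)) (j : Fin D)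
    (φ : 𝓢(EuclideanSpace ℝ (Fin D), ℂ)) :
    Real.sqrt ℏ * L2norm D (⇑φ)
      ≤ L2norm D (Aop D ℏ α (Sum.inl j) (⇑φ)) + L2norm D (Aop D ℏ α (Sum.inr j) (⇑φ)) := by
  have hu : ∀ x, AopS D ℏ α (Sum.inl j) φ x = ((x j : ℂ) - (α.1 j : ℂ)) * φ x := fun x =>
    AopS_apply D ℏ α (Sum.inl j) φ x
  have hv : ∀ x, AopS D ℏ α (Sum.inr j) φ x
      = (-Complex.I * (ℏ : ℂ)) * fderiv ℝ (⇑φ) x (EuclideanSpace.single j 1)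
        - (α.2 j : ℂ) * φ x := fun x => AopS_apply D ℏ α (Sum.inr j) φ x
  have hkey := key ℏ (α.1 j) (α.2 j) j φ _ _ hu hv
  have h1 : Aop D ℏ α (Sum.inl j) (⇑φ) = ⇑(AopS D ℏ α (Sum.inl j) φ) :=
    funext fun x => (AopS_apply D ℏ α (Sum.inl j) φ x).symm
  have h2 : Aop D ℏ α (Sum.inr j) (⇑φ) = ⇑(AopS D ℏ α (Sum.inr j) φ) :=
    funext fun x => (AopS_apply D ℏ α (Sum.inr j) φ x).symm
  rw [h1, h2]
  unfold L2norm
  set N : ℝ := ∫ x : EuclideanSpace ℝ (Fin D), ‖φ x‖ ^ 2 with hN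
  set A : ℝ := ∫ x : EuclideanSpace ℝ (Fin D), ‖AopS D ℏ α (Sum.inl j) φ x‖ ^ 2 with hA
  set B : ℝ := ∫ x : EuclideanSpace ℝ (Fin D), ‖AopS D ℏ α (Sum.inr j) φ x‖ ^ 2 with hB
  have hA0 : 0 ≤ A := integral_nonneg fun x => by positivity
  have hB0 : 0 ≤ B := integral_nonneg fun x => by positivity
  have hN0 : 0 ≤ N := integral_nonneg fun x => by positivity
  calc Real.sqrt ℏ * Real.sqrt N = Real.sqrt (ℏ * N) := (Real.sqrt_mul hℏ.le N).symm
    _ ≤ Real.sqrt (A + B) := Real.sqrt_le_sqrt hkey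
    _ ≤ Real.sqrt A + Real.sqrt B := sqrt_add_le A B hA0 hB0

lemma HkNorm_succ (D : ℕ) (ℏ : ℝ)
    (α : EuclideanSpace ℝ (Fin D) × EuclideanSpace ℝ (Fin D)) (k : ℕ)
    (f : EuclideanSpace ℝ (Fin D) → ℂ) :
    HkNorm D ℏ α (k + 1) f
      = ∑ m : Fin k → (Fin D ⊕ Fin D), ∑ a : Fin D ⊕ Fin D,
          L2norm D (Aop D ℏ α a ((List.ofFn m).foldr (fun a g => Aop D ℏ α a g) f)) := by
  rw [HkNorm, ← Equiv.sum_comp (Fin.consEquiv (fun _ : Fin (k + 1) => (Fin D ⊕ Fin D))),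
    Fintype.sum_prod_type, Finset.sum_comm]
  refine Finset.sum_congr rfl fun m _ => Finset.sum_congr rfl fun a _ => ?_
  have hc : (Fin.consEquiv (fun _ : Fin (k + 1) => (Fin D ⊕ Fin D))) (a, m) = Fin.cons a m := rfl
  rw [hc, List.ofFn_succ]
  congr 1

theorem Hk_norm_lower_bound (D : ℕ) (hD : 1 ≤ D) (ℏ : ℝ) (hℏ : 0 < ℏ)
    (α : EuclideanSpace ℝ (Fin D) × EuclideanSpace ℝ (Fin D))
    (k : ℕ) (hk : 1 ≤ k)
    (ψ : SchwartzMap (EuclideanSpace ℝ (Fin D)) ℂ) :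
    HkNorm D ℏ α k (fun x => ψ x) ≥ Real.sqrt ℏ * HkNorm D ℏ α (k - 1) (fun x => ψ x) := by
  obtain ⟨k', rfl⟩ : ∃ k', k = k' + 1 := ⟨k - 1, (Nat.succ_pred_eq_of_pos hk).symm⟩
  have hk1 : k' + 1 - 1 = k' := rfl
  rw [hk1, ge_iff_le]
  set j0 : Fin D := ⟨0, hD⟩ with hj0
  calc Real.sqrt ℏ * HkNorm D ℏ α k' (fun x => ψ x)
      = ∑ m : Fin k' → (Fin D ⊕ Fin D), Real.sqrt ℏ *
          L2norm D ((List.ofFn m).foldr (fun a g => Aop D ℏ α a g) (fun x => ψ x)) := by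
        rw [HkNorm, Finset.mul_sum]
    _ ≤ ∑ m : Fin k' → (Fin D ⊕ Fin D),
          (L2norm D (Aop D ℏ α (Sum.inl j0)
              ((List.ofFn m).foldr (fun a g => Aop D ℏ α a g) (fun x => ψ x)))
            + L2norm D (Aop D ℏ α (Sum.inr j0)
              ((List.ofFn m).foldr (fun a g => Aop D ℏ α a g) (fun x => ψ x)))) := by
        refine Finset.sum_le_sum fun m _ => ?_
        rw [coe_fold D ℏ α (List.ofFn m) ψ]
        exact key2 D ℏ hℏ α j0 _
    _ ≤ ∑ m : Fin k' → (Fin D ⊕ Fin D), ∑ a : Fin D ⊕ Fin D,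
          L2norm D (Aop D ℏ α a
            ((List.ofFn m).foldr (fun a g => Aop D ℏ α a g) (fun x => ψ x))) := by
        refine Finset.sum_le_sum fun m _ => ?_
        have hne : (Sum.inl j0 : Fin D ⊕ Fin D) ≠ Sum.inr j0 := by simp
        have := Finset.sum_pair (f := fun a : Fin D ⊕ Fin D =>
          L2norm D (Aop D ℏ α a
            ((List.ofFn m).foldr (fun a g => Aop D ℏ α a g) (fun x => ψ x)))) hne
        rw [← this]
        refine Finset.sum_le_sum_of_subset_of_nonneg (Finset.subset_univ _) fun a _ _ =>
          L2norm_nonneg D _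
    _ = HkNorm D ℏ α (k' + 1) (fun x => ψ x) := (HkNorm_succ D ℏ α k' _).symm
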